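/- Consequently, c̃_S(w_{1:i}) − c(w_{1:i}) ≤ Σ_{w_{1:j} ∈ X_S(w_{1:i})} P(w_{i+1:j} | w_{1:i}) ≤ P( the completion of w_{1:i} sampled from P reaches some prefix in X_S(w_{1:i}) ). In particular, if every string of L extending w_{1:i} is in S, then c̃_S(w_{1:i}) = c(w_{1:i}). -/

import Mathlib

open scoped BigOperators
open Finset Filter

namespace GAD

/-- Marginal probability of the prefix `u` under a distribution `P` on length-`n` strings. -/
noncomputable def marg {α : Type*} [Fintype α] (n : ℕ) (P : List α → ℝ) (u : List α) : ℝ :=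
  ∑ v : Fin (n - u.length) → α, P (u ++ List.ofFn v)

/-- Marginal probability mass of completions of `u` that land in the language `L`. -/
noncomputable def margL {α : Type*} [Fintype α] (n : ℕ) (P : List α → ℝ) (L : Set (List α))
    (u : List α) : ℝ :=
  ∑ v : Fin (n - u.length) → α, L.indicator P (u ++ List.ofFn v)

/-- Next-token conditional `P(a | u)`. -/
noncomputable def cond {α : Type*} [Fintype α] (n : ℕ) (P : List α → ℝ) (u : List α) (a : α) : ℝ :=
  marg n P (u ++ [a]) / marg n P u

/-- Expected future grammaticality `c(u) = Σ_v P(v | u) · 1[u ++ v ∈ L]`. -/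
noncomputable def efg {α : Type*} [Fintype α] (n : ℕ) (P : List α → ℝ) (L : Set (List α))
    (u : List α) : ℝ :=
  margL n P L u / marg n P u

/-- `u` is a prefix of some string of the language `L`. -/
def inPrefix {α : Type*} (L : Set (List α)) (u : List α) : Prop := ∃ v, u ++ v ∈ L

/-- Total probability mass of the language: `P(L)`. -/
noncomputable def PL {α : Type*} [Fintype α] (n : ℕ) (P : List α → ℝ) (L : Set (List α)) : ℝ :=
  margL n P L []

open Classical in
/-- ASAp approximation of expected future grammaticality, with fuel = remaining length. -/
noncomputable def ctildeAux {α : Type*} [Fintype α] (n : ℕ) (P : List α → ℝ) (L : Set (List α))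
    (S : Finset (List α)) : ℕ → List α → ℝ
  | 0, u => Set.indicator L (fun _ => (1 : ℝ)) u
  | (k + 1), u =>
      if ∃ s ∈ S, u <+: s then
        ∑ a : α, cond n P u a * ctildeAux n P L S k (u ++ [a])
      else Set.indicator {t | inPrefix L t} (fun _ => (1 : ℝ)) u

/-- ASAp overapproximation `c̃_S`. -/
noncomputable def ctilde {α : Type*} [Fintype α] (n : ℕ) (P : List α → ℝ) (L : Set (List α))
    (S : Finset (List α)) (u : List α) : ℝ :=
  ctildeAux n P L S (n - u.length) u

/-- The antichain of shortest extensions of `u` lying in `L_prefix` that are not prefixes of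
any previously sampled string in `S` (every proper extension-prefix between `u` and `t`
is a prefix of some sample). -/
def XS {α : Type*} (L : Set (List α)) (S : Finset (List α)) (u : List α) : Set (List α) :=
  {t | u <+: t ∧ inPrefix L t ∧ (¬ ∃ s ∈ S, t <+: s) ∧
       ∀ t', u <+: t' → t' <+: t → t' ≠ t → ∃ s ∈ S, t' <+: s}

section helpers
variable {α : Type*} [Fintype α] {n : ℕ} {P : List α → ℝ} {L : Set (List α)} {S : Finset (List α)}

lemma sum_ofFn_succ (n : ℕ) (Q : List α → ℝ) (u : List α) (m : ℕ)
    (h : n - u.length = m + 1) :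
    (∑ v : Fin (n - u.length) → α, Q (u ++ List.ofFn v))
      = ∑ a : α, ∑ v : Fin (n - (u ++ [a]).length) → α, Q ((u ++ [a]) ++ List.ofFn v) := by
  have h2 : ∀ a : α, n - (u ++ [a]).length = m := by
    intro a; simp; omega
  rw [h]
  rw [← (Fin.consEquiv (fun _ : Fin (m + 1) => α)).sum_comp (fun v => Q (u ++ List.ofFn v))]
  rw [Fintype.sum_prod_type]
  refine Finset.sum_congr rfl fun a _ => ?_
  rw [h2 a]
  refine Finset.sum_congr rfl fun v _ => ?_
  congr 1
  simp [List.ofFn_succ, Fin.cons]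

lemma sum_ofFn_zero (n : ℕ) (Q : List α → ℝ) (u : List α) (h : n - u.length = 0) :
    (∑ v : Fin (n - u.length) → α, Q (u ++ List.ofFn v)) = Q u := by
  rw [h]; simp

lemma marg_nonneg (hP : ∀ w, 0 ≤ P w) (u : List α) : 0 ≤ marg n P u :=
  Finset.sum_nonneg fun _ _ => hP _

lemma margL_nonneg (hP : ∀ w, 0 ≤ P w) (u : List α) : 0 ≤ margL n P L u :=
  Finset.sum_nonneg fun _ _ => Set.indicator_nonneg (fun w _ => hP w) _

lemma efg_nonneg (hP : ∀ w, 0 ≤ P w) (u : List α) : 0 ≤ efg n P L u :=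
  div_nonneg (margL_nonneg hP u) (marg_nonneg hP u)

lemma cond_nonneg (hP : ∀ w, 0 ≤ P w) (u : List α) (a : α) : 0 ≤ cond n P u a :=
  div_nonneg (marg_nonneg hP _) (marg_nonneg hP u)

lemma marg_top (u : List α) (h : n - u.length = 0) : marg n P u = P u :=
  sum_ofFn_zero n P u h

lemma margL_top (u : List α) (h : n - u.length = 0) : margL n P L u = L.indicator P u :=
  sum_ofFn_zero n (L.indicator P) u h

lemma marg_succ (u : List α) (m : ℕ) (h : n - u.length = m + 1) :
    marg n P u = ∑ a : α, marg n P (u ++ [a]) :=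
  sum_ofFn_succ n P u m h

lemma margL_succ (u : List α) (m : ℕ) (h : n - u.length = m + 1) :
    margL n P L u = ∑ a : α, margL n P L (u ++ [a]) :=
  sum_ofFn_succ n (L.indicator P) u m h

lemma efg_succ (hmarg : ∀ v : List α, v.length ≤ n → 0 < marg n P v)
    (u : List α) (h : u.length < n) :
    efg n P L u = ∑ a : α, cond n P u a * efg n P L (u ++ [a]) := by
  have hm : n - u.length = (n - (u.length + 1)) + 1 := by omega
  have hmu : marg n P u ≠ 0 := (hmarg u h.le).ne'
  unfold efg cond
  rw [margL_succ u _ hm, Finset.sum_div]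
  refine Finset.sum_congr rfl fun a _ => ?_
  have hma : marg n P (u ++ [a]) ≠ 0 := (hmarg _ (by simp; omega)).ne'
  field_simp

end helpers

section xslemmas
set_option linter.unusedSectionVars false
variable {α : Type*} [Fintype α] {n : ℕ} {P : List α → ℝ} {L : Set (List α)} {S : Finset (List α)}

open Classical in
/-- All lists of length at most `n`. -/
noncomputable def Tset (α : Type*) [Fintype α] (n : ℕ) : Finset (List α) :=
  (Finset.range (n + 1)).biUnion fun k => Finset.univ.image fun v : Fin k → α => List.ofFn v

lemma mem_Tset {t : List α} : t ∈ Tset α n ↔ t.length ≤ n := by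
  classical
  simp only [Tset, Finset.mem_biUnion, Finset.mem_range, Finset.mem_image, Finset.mem_univ,
    true_and]
  constructor
  · rintro ⟨k, hk, v, rfl⟩; simp; omega
  · intro h; exact ⟨t.length, by omega, t.get, List.ofFn_get t⟩

lemma prefix_snoc_inj {u t : List α} {a b : α} (h1 : u ++ [a] <+: t) (h2 : u ++ [b] <+: t) :
    a = b := by
  have h3 : u ++ [a] <+: u ++ [b] := List.prefix_of_prefix_length_le h1 h2 (by simp)
  have h4 : u ++ [a] = u ++ [b] := h3.eq_of_length (by simp)
  simpa using h4

lemma xs_length_le (hL : ∀ w ∈ L, w.length = n) {u t : List α} (ht : t ∈ XS L S u) :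
    t.length ≤ n := by
  obtain ⟨v, hv⟩ := ht.2.1
  have := hL _ hv
  simp only [List.length_append] at this
  omega

lemma xs_empty_of_not_inPrefix {u : List α} (h : ¬ inPrefix L u) : XS L S u = ∅ := by
  ext t
  simp only [Set.mem_empty_iff_false, iff_false]
  rintro ⟨⟨r, rfl⟩, ⟨w, hw⟩, -, -⟩
  exact h ⟨r ++ w, by rwa [← List.append_assoc]⟩

lemma xs_singleton {u : List α} (h1 : ¬ ∃ s ∈ S, u <+: s) (h2 : inPrefix L u) :
    XS L S u = {u} := by
  ext t
  simp only [Set.mem_singleton_iff]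
  constructor
  · rintro ⟨hp, -, h3, h4⟩
    by_contra hne
    exact h1 (h4 u (List.prefix_refl u) hp fun e => hne e.symm)
  · rintro rfl
    refine ⟨List.prefix_refl _, h2, h1, fun t' h1' h2' hne => ?_⟩
    exact absurd (h2'.eq_of_length (le_antisymm h2'.length_le h1'.length_le)) hne

lemma xs_empty_top (hL : ∀ w ∈ L, w.length = n) {u : List α}
    (hsam : ∃ s ∈ S, u <+: s) (hu : u.length = n) : XS L S u = ∅ := by
  ext t
  simp only [Set.mem_empty_iff_false, iff_false]
  rintro ⟨h1, h2, h3, h4⟩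
  have hle : t.length ≤ n := xs_length_le hL ⟨h1, h2, h3, h4⟩
  have hul := h1.length_le
  have : u = t := h1.eq_of_length (by omega)
  subst this
  exact h3 hsam

lemma xs_child_mem {u : List α} (hsam : ∃ s ∈ S, u <+: s) (a : α) {t : List α}
    (ht : t ∈ XS L S (u ++ [a])) : t ∈ XS L S u := by
  obtain ⟨h1, h2, h3, h4⟩ := ht
  refine ⟨(u.prefix_append [a]).trans h1, h2, h3, ?_⟩
  intro t' ht'u ht't hne
  rcases List.prefix_or_prefix_of_prefix ht't h1 with hc | hc
  · by_cases he : t' = u ++ [a]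
    · subst he; exact h4 _ (List.prefix_refl _) h1 hne
    · have hlen : t'.length ≤ u.length := by
        have hl1 := hc.length_le
        simp only [List.length_append, List.length_singleton] at hl1
        by_contra hgt
        push_neg at hgt
        exact he (hc.eq_of_length (by simp; omega))
      have : u = t' := ht'u.eq_of_length (le_antisymm ht'u.length_le hlen)
      subst this
      exact hsam
  · exact h4 t' hc ht't hne

lemma xs_mem_child {u : List α} (hsam : ∃ s ∈ S, u <+: s) {t : List α}
    (ht : t ∈ XS L S u) : ∃ a : α, (u ++ [a]) <+: t ∧ t ∈ XS L S (u ++ [a]) := by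
  obtain ⟨h1, h2, h3, h4⟩ := ht
  have hne : u ≠ t := by rintro rfl; exact h3 hsam
  have hlt : u.length < t.length :=
    lt_of_le_of_ne h1.length_le fun e => hne (h1.eq_of_length e)
  have hpre : u ++ [t.get ⟨u.length, hlt⟩] <+: t := List.concat_get_prefix h1 hlt
  refine ⟨_, hpre, hpre, h2, h3, ?_⟩
  intro t' ht'1 ht'2 hne'
  exact h4 t' ((u.prefix_append _).trans ht'1) ht'2 hne'

lemma xs_indicator_sum {u : List α} (hsam : ∃ s ∈ S, u <+: s) (f : List α → ℝ) (t : List α) :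
    Set.indicator (XS L S u) f t = ∑ a : α, Set.indicator (XS L S (u ++ [a])) f t := by
  by_cases ht : t ∈ XS L S u
  · obtain ⟨a, hpre, hmem⟩ := xs_mem_child hsam ht
    rw [Set.indicator_of_mem ht]
    rw [Finset.sum_eq_single a]
    · rw [Set.indicator_of_mem hmem]
    · intro b _ hba
      rw [Set.indicator_of_notMem]
      exact fun hb => hba (prefix_snoc_inj hb.1 hpre)
    · simp
  · rw [Set.indicator_of_notMem ht]
    refine (Finset.sum_eq_zero fun a _ => ?_).symm
    rw [Set.indicator_of_notMem]
    exact fun h => ht (xs_child_mem hsam a h)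

end xslemmas

section mglemmas
set_option linter.unusedSectionVars false
variable {α : Type*} [Fintype α] {n : ℕ} {P : List α → ℝ} {L : Set (List α)} {S : Finset (List α)}

/-- Total mass of the antichain `X_S(u)`. -/
noncomputable def Mfun (n : ℕ) (P : List α → ℝ) (L : Set (List α)) (S : Finset (List α))
    (u : List α) : ℝ :=
  ∑ t ∈ Tset α n, Set.indicator (XS L S u) (marg n P) t

/-- Mass of full strings extending `u` that pass through the antichain `X_S(u)`. -/
noncomputable def Gfun (n : ℕ) (P : List α → ℝ) (L : Set (List α)) (S : Finset (List α))
    (u : List α) : ℝ :=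
  ∑ v : Fin (n - u.length) → α,
    Set.indicator {x | ∃ t ∈ XS L S u, t <+: x} P (u ++ List.ofFn v)

lemma Mfun_nonneg (hP : ∀ w, 0 ≤ P w) (u : List α) : 0 ≤ Mfun n P L S u :=
  Finset.sum_nonneg fun _ _ => Set.indicator_nonneg (fun t _ => marg_nonneg hP t) _

lemma Mfun_empty {u : List α} (h : XS L S u = ∅) : Mfun n P L S u = 0 := by
  unfold Mfun; simp [h]

lemma Gfun_empty {u : List α} (h : XS L S u = ∅) : Gfun n P L S u = 0 := by
  unfold Gfun; simp [h]

lemma Mfun_singleton {u : List α} (h : XS L S u = {u}) (hu : u.length ≤ n) :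
    Mfun n P L S u = marg n P u := by
  unfold Mfun
  rw [h]
  have h1 := Finset.sum_eq_single_of_mem (f := Set.indicator ({u} : Set (List α)) (marg n P)) u
    (mem_Tset.mpr hu) (fun b _ hb => Set.indicator_of_notMem (s := ({u} : Set (List α))) (fun hm => hb hm) (marg n P))
  exact h1.trans (Set.indicator_of_mem (Set.mem_singleton u) (marg n P))

lemma Gfun_singleton {u : List α} (h : XS L S u = {u}) : Gfun n P L S u = marg n P u := by
  unfold Gfun marg
  rw [h]
  refine Finset.sum_congr rfl fun v _ => ?_
  apply Set.indicator_of_mem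
  exact ⟨u, rfl, List.prefix_append u _⟩

lemma Mfun_succ {u : List α} (hsam : ∃ s ∈ S, u <+: s) :
    Mfun n P L S u = ∑ a : α, Mfun n P L S (u ++ [a]) := by
  unfold Mfun
  rw [← Finset.sum_comm]
  exact Finset.sum_congr rfl fun t _ => xs_indicator_sum hsam (marg n P) t

lemma Gfun_succ {u : List α} (hsam : ∃ s ∈ S, u <+: s) (hlt : u.length < n) :
    Gfun n P L S u = ∑ a : α, Gfun n P L S (u ++ [a]) := by
  have hm : n - u.length = (n - (u.length + 1)) + 1 := by omega
  unfold Gfun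
  rw [sum_ofFn_succ n _ u _ hm]
  refine Finset.sum_congr rfl fun a _ => Finset.sum_congr rfl fun v _ => ?_
  set x := (u ++ [a]) ++ List.ofFn v with hx
  have hax : u ++ [a] <+: x := List.prefix_append _ _
  have hiff : (∃ t ∈ XS L S u, t <+: x) ↔ (∃ t ∈ XS L S (u ++ [a]), t <+: x) := by
    constructor
    · rintro ⟨t, htm, htp⟩
      obtain ⟨b, hbp, hbm⟩ := xs_mem_child hsam htm
      have hba : b = a := prefix_snoc_inj (hbp.trans htp) hax
      exact ⟨t, hba ▸ hbm, htp⟩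
    · rintro ⟨t, htm, htp⟩
      exact ⟨t, xs_child_mem hsam a htm, htp⟩
  by_cases hmem : ∃ t ∈ XS L S u, t <+: x
  · have hm1 : x ∈ {x | ∃ t ∈ XS L S u, t <+: x} := hmem
    have hm2 : x ∈ {x | ∃ t ∈ XS L S (u ++ [a]), t <+: x} := hiff.mp hmem
    rw [Set.indicator_of_mem hm1, Set.indicator_of_mem hm2]
  · have hm1 : x ∉ {x | ∃ t ∈ XS L S u, t <+: x} := hmem
    have hm2 : x ∉ {x | ∃ t ∈ XS L S (u ++ [a]), t <+: x} := fun h => hmem (hiff.mpr h)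
    rw [Set.indicator_of_notMem hm1, Set.indicator_of_notMem hm2]

end mglemmas

section main
set_option linter.unusedSectionVars false
variable {α : Type*} [Fintype α] {n : ℕ} {P : List α → ℝ} {L : Set (List α)} {S : Finset (List α)}

lemma main_ind (hP : ∀ w, 0 ≤ P w) (hL : ∀ w ∈ L, w.length = n) (hS : ↑S ⊆ L)
    (hmarg : ∀ v : List α, v.length ≤ n → 0 < marg n P v) :
    ∀ k (u : List α), u.length ≤ n → n - u.length = k →
      (ctildeAux n P L S k u - efg n P L u ≤ Mfun n P L S u / marg n P u) ∧
      Mfun n P L S u = Gfun n P L S u ∧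
      ((∀ t ∈ L, u <+: t → t ∈ S) → ctildeAux n P L S k u = efg n P L u) := by
  intro k
  induction k with
  | zero =>
    intro u hu hk
    have hulen : u.length = n := by omega
    have hPu : marg n P u = P u := marg_top u hk
    have hLu : margL n P L u = L.indicator P u := margL_top u hk
    have hmu : marg n P u ≠ 0 := (hmarg u hu).ne'
    have heq : ctildeAux n P L S 0 u = efg n P L u := by
      simp only [ctildeAux]
      unfold efg
      rw [hLu, hPu]
      by_cases hmem : u ∈ L
      · rw [Set.indicator_of_mem hmem, Set.indicator_of_mem hmem]
        rw [div_self (by rw [← hPu]; exact hmu)]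
      · rw [Set.indicator_of_notMem hmem, Set.indicator_of_notMem hmem, zero_div]
    refine ⟨?_, ?_, fun _ => heq⟩
    · rw [heq, sub_self]
      exact div_nonneg (Mfun_nonneg hP u) (marg_nonneg hP u)
    · by_cases hsam : ∃ s ∈ S, u <+: s
      · rw [Mfun_empty (xs_empty_top hL hsam hulen),
          Gfun_empty (xs_empty_top hL hsam hulen)]
      · by_cases hpre : inPrefix L u
        · rw [Mfun_singleton (xs_singleton hsam hpre) hu,
            Gfun_singleton (xs_singleton hsam hpre)]
        · rw [Mfun_empty (xs_empty_of_not_inPrefix hpre),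
            Gfun_empty (xs_empty_of_not_inPrefix hpre)]
  | succ k ih =>
    intro u hu hk
    have hlt : u.length < n := by omega
    have hmu : marg n P u ≠ 0 := (hmarg u hu).ne'
    have hchild : ∀ a : α, (u ++ [a]).length ≤ n := by intro a; simp; omega
    have hchildk : ∀ a : α, n - (u ++ [a]).length = k := by intro a; simp; omega
    by_cases hsam : ∃ s ∈ S, u <+: s
    · have hct : ctildeAux n P L S (k + 1) u
          = ∑ a : α, cond n P u a * ctildeAux n P L S k (u ++ [a]) := by
        simp only [ctildeAux]
        rw [if_pos hsam]
      have hma : ∀ a : α, marg n P (u ++ [a]) ≠ 0 := fun a => (hmarg _ (hchild a)).ne'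
      refine ⟨?_, ?_, ?_⟩
      · rw [hct, efg_succ hmarg u hlt, ← Finset.sum_sub_distrib]
        have step1 : ∀ a ∈ (Finset.univ : Finset α),
            cond n P u a * ctildeAux n P L S k (u ++ [a])
                - cond n P u a * efg n P L (u ++ [a])
              ≤ Mfun n P L S (u ++ [a]) / marg n P u := by
          intro a _
          have h1 := (ih (u ++ [a]) (hchild a) (hchildk a)).1
          calc cond n P u a * ctildeAux n P L S k (u ++ [a])
                - cond n P u a * efg n P L (u ++ [a])
              = cond n P u a * (ctildeAux n P L S k (u ++ [a]) - efg n P L (u ++ [a])) := by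
                ring
            _ ≤ cond n P u a * (Mfun n P L S (u ++ [a]) / marg n P (u ++ [a])) :=
                mul_le_mul_of_nonneg_left h1 (cond_nonneg hP u a)
            _ = Mfun n P L S (u ++ [a]) / marg n P u := by
                unfold cond
                rw [mul_comm, div_mul_div_comm,
                  mul_comm (Mfun n P L S (u ++ [a])) (marg n P (u ++ [a]))]
                exact mul_div_mul_left _ _ (hma a)
        calc (∑ a : α, (cond n P u a * ctildeAux n P L S k (u ++ [a])
                - cond n P u a * efg n P L (u ++ [a])))
            ≤ ∑ a : α, Mfun n P L S (u ++ [a]) / marg n P u := Finset.sum_le_sum step1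
          _ = (∑ a : α, Mfun n P L S (u ++ [a])) / marg n P u := by rw [Finset.sum_div]
          _ = Mfun n P L S u / marg n P u := by rw [← Mfun_succ hsam]
      · rw [Mfun_succ hsam, Gfun_succ hsam hlt]
        exact Finset.sum_congr rfl fun a _ => (ih (u ++ [a]) (hchild a) (hchildk a)).2.1
      · intro H
        rw [hct, efg_succ hmarg u hlt]
        refine Finset.sum_congr rfl fun a _ => ?_
        rw [(ih (u ++ [a]) (hchild a) (hchildk a)).2.2
          (fun t htL htp => H t htL ((u.prefix_append [a]).trans htp))]
    · have hct : ctildeAux n P L S (k + 1) u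
          = Set.indicator {t | inPrefix L t} (fun _ => (1 : ℝ)) u := by
        simp only [ctildeAux]
        rw [if_neg hsam]
      by_cases hpre : inPrefix L u
      · have hX := xs_singleton (L := L) hsam hpre
        have hct1 : ctildeAux n P L S (k + 1) u = 1 := by
          have hm : u ∈ {t | inPrefix L t} := hpre
          rw [hct]; exact Set.indicator_of_mem hm _
        refine ⟨?_, ?_, ?_⟩
        · rw [hct1, Mfun_singleton hX hu, div_self hmu]
          have := efg_nonneg (L := L) (n := n) hP u
          linarith
        · rw [Mfun_singleton hX hu, Gfun_singleton hX]
        · intro H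
          obtain ⟨v, hv⟩ := hpre
          exact absurd ⟨u ++ v, H _ hv (u.prefix_append v), u.prefix_append v⟩ hsam
      · have hX := xs_empty_of_not_inPrefix (L := L) (S := S) hpre
        have hct0 : ctildeAux n P L S (k + 1) u = 0 := by
          have hm : u ∉ {t | inPrefix L t} := hpre
          rw [hct]; exact Set.indicator_of_notMem hm _
        have hefg : efg n P L u = 0 := by
          unfold efg
          have hz : margL n P L u = 0 := by
            unfold margL
            refine Finset.sum_eq_zero fun v _ => ?_
            exact Set.indicator_of_notMem (fun hm => hpre ⟨List.ofFn v, hm⟩) P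
          rw [hz, zero_div]
        refine ⟨?_, ?_, fun _ => by rw [hct0, hefg]⟩
        · rw [hct0, hefg, sub_zero, Mfun_empty hX, zero_div]
        · rw [Mfun_empty hX, Gfun_empty hX]

end main

/-- `c̃_S(u) − c(u)` is at most the total conditional mass of the unexplored
antichain `X_S(u)`, which is at most the probability that a `P`-completion of `u` reaches
some prefix in `X_S(u)`; and if every string of `L` extending `u` is in `S`, then
`c̃_S(u) = c(u)`. -/
theorem stmt7 {α : Type*} [Fintype α] (n : ℕ) (P : List α → ℝ) (L : Set (List α))
    (hP : ∀ w, 0 ≤ P w) (hL : ∀ w ∈ L, w.length = n)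
    (S : Finset (List α)) (hS : ↑S ⊆ L)
    (hmarg : ∀ v : List α, v.length ≤ n → 0 < marg n P v)
    (u : List α) (hu : u.length ≤ n) :
    ctilde n P L S u - efg n P L u ≤ (∑ᶠ t ∈ XS L S u, marg n P t / marg n P u) ∧
    (∑ᶠ t ∈ XS L S u, marg n P t / marg n P u) ≤
      (∑ v : Fin (n - u.length) → α,
          Set.indicator {x | ∃ t ∈ XS L S u, t <+: x} P (u ++ List.ofFn v)) / marg n P u ∧
    ((∀ t ∈ L, u <+: t → t ∈ S) → ctilde n P L S u = efg n P L u) := by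
  obtain ⟨h1, h2, h3⟩ := main_ind hP hL hS hmarg (n - u.length) u hu rfl
  have hfin : (XS L S u).Finite :=
    Set.Finite.subset (Tset α n).finite_toSet fun t ht => mem_Tset.mpr (xs_length_le hL ht)
  have hsub : hfin.toFinset ⊆ Tset α n := fun t ht =>
    mem_Tset.mpr (xs_length_le hL (hfin.mem_toFinset.mp ht))
  have hM : Mfun n P L S u = ∑ t ∈ hfin.toFinset, marg n P t := by
    unfold Mfun
    refine ((Finset.sum_subset hsub fun x _ hx =>
      Set.indicator_of_notMem (fun hmem => hx (hfin.mem_toFinset.mpr hmem)) _).symm).trans ?_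
    exact Finset.sum_congr rfl fun t ht => Set.indicator_of_mem (hfin.mem_toFinset.mp ht) _
  have hfs : (∑ᶠ t ∈ XS L S u, marg n P t / marg n P u) = Mfun n P L S u / marg n P u := by
    rw [finsum_mem_eq_finite_toFinset_sum _ hfin, ← Finset.sum_div, ← hM]
  refine ⟨?_, ?_, h3⟩
  · rw [hfs]; exact h1
  · rw [hfs]
    exact le_of_eq (congrArg (· / marg n P u) h2)

end GAD
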